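/- Let f : D → ℝ^n be a continuous mapping that is differentiable almost everywhere in D and possesses the N^{-1}-property. Then J(x,f) ≠ 0 for almost every x ∈ D. -/

import Mathlib

open MeasureTheory Set
open scoped ENNReal NNReal Topology

noncomputable section

/-- `ℝⁿ` as Euclidean space. -/
abbrev Eucl (n : ℕ) := EuclideanSpace ℝ (Fin n)

/-- Jacobian determinant `J(x,f)` (equal to `0` where `f` is not differentiable). -/
def jacDet {n : ℕ} (f : Eucl n → Eucl n) (x : Eucl n) : ℝ :=
  LinearMap.det (fderiv ℝ f x : Eucl n →ₗ[ℝ] Eucl n)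

/-- Lusin's `N⁻¹`-property on `D`. -/
def LusinNInv {n : ℕ} (f : Eucl n → Eucl n) (D : Set (Eucl n)) : Prop :=
  ∀ S : Set (Eucl n), volume S = 0 → volume (D ∩ f ⁻¹' S) = 0

/-- **Proposition (nonvanishing of the Jacobian).**
Let `f : D → ℝⁿ` be a continuous mapping which is differentiable a.e. in `D`
and possesses the `N⁻¹`-property.  Then `J(x,f) ≠ 0` for a.e. `x ∈ D`. -/
theorem jacobian_nonzero_ae_of_NInv
    (n : ℕ) (hn : 2 ≤ n)
    (D : Set (Eucl n)) (hDopen : IsOpen D) (hDconn : IsConnected D)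
    (f : Eucl n → Eucl n) (hfcont : ContinuousOn f D)
    (hdiff : ∀ᵐ x ∂(volume.restrict D), DifferentiableAt ℝ f x)
    (hfNinv : LusinNInv f D) :
    ∀ᵐ x ∂(volume.restrict D), jacDet f x ≠ 0 := by
  set Z : Set (Eucl n) :=
    {x | x ∈ D ∧ DifferentiableAt ℝ f x ∧ jacDet f x = 0} with hZ
  -- image of Z has measure zero
  have himg : volume (f '' Z) = 0 := by
    apply addHaar_image_eq_zero_of_det_fderivWithin_eq_zero (volume : Measure (Eucl n))
      (f' := fun x => fderiv ℝ f x)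
    · intro x hx
      exact (hx.2.1.hasFDerivAt).hasFDerivWithinAt
    · intro x hx
      exact hx.2.2
  have hZ0 : volume Z = 0 := by
    have hsub : Z ⊆ D ∩ f ⁻¹' (f '' Z) := fun x hx =>
      ⟨hx.1, Set.mem_image_of_mem f hx⟩
    exact le_antisymm (le_trans (measure_mono hsub) (hfNinv _ himg).le) zero_le
  have hZae : ∀ᵐ x ∂(volume : Measure (Eucl n)), x ∉ Z :=
    measure_eq_zero_iff_ae_notMem.mp hZ0
  rw [ae_restrict_iff' hDopen.measurableSet] at hdiff ⊢
  filter_upwards [hdiff, hZae] with x hx hxZ hxD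
  intro h0
  exact hxZ ⟨hxD, hx hxD, h0⟩
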